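/- The dereliction der_A = {([a],a) | a ∈ A} : §A → A and digging dig_A relating Σᵢ wᵢ to [w₁, w₂, …] for any finite or countable family wᵢ ∈ §A, make the finite-or-countable multiset construction § a comonad on the category of sets (of cardinality at most 2^ℵ₀) and relations. -/

import Mathlib

open Classical

/-- Binary relations between sets, as morphisms of the category of sets and relations. -/
abbrev Rel' (A B : Type) := Set (A × B)

/-- Relational composition (diagrammatic order). -/
def rcomp {A B C : Type} (f : Rel' A B) (g : Rel' B C) : Rel' A C :=
  {p | ∃ b, (p.1, b) ∈ f ∧ (b, p.2) ∈ g}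

/-- The identity relation. -/
def rid (A : Type) : Rel' A A := {p | p.1 = p.2}

/-- `§A`: the set of finite-or-countable multisets over `A`, i.e. functions
`A → ℕ∞` with finite or countable support. -/
def SMul' (A : Type) := {m : A → ℕ∞ // Set.Countable {a | m a ≠ 0}}

/-- The number of occurrences (in `ℕ∞`) of `a` in the finite-or-countable family
`w : ℕ → Option A`, as the supremum of finite counts. -/
noncomputable def occCount {A : Type} (w : ℕ → Option A) (a : A) : ℕ∞ :=
  ⨆ s : Finset ℕ, ((s.filter fun n => w n = some a).card : ℕ∞)

/-- `w` is an enumeration (representation) of the finite-or-countable multiset `m`. -/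
def realizes {A : Type} (w : ℕ → Option A) (m : SMul' A) : Prop :=
  ∀ a, m.val a = occCount w a

/-- The action of `§` on a relation `f : A → B`: `§f` relates a finite-or-countable
multiset `m₁` to `m₂` when there are enumerations of `m₁` and `m₂` matched index by
index by pairs belonging to `f`. -/
def sRel {A B : Type} (f : Rel' A B) : Rel' (SMul' A) (SMul' B) :=
  {p | ∃ (w₁ : ℕ → Option A) (w₂ : ℕ → Option B),
    realizes w₁ p.1 ∧ realizes w₂ p.2 ∧ (∀ n, w₁ n = none ↔ w₂ n = none) ∧
    ∀ n a b, w₁ n = some a → w₂ n = some b → (a, b) ∈ f}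

/-- Dereliction `der_A = {([a],a) | a ∈ A} : §A → A`. -/
def sder (A : Type) : Rel' (SMul' A) A :=
  {p | ∀ a, p.1.val a = if a = p.2 then 1 else 0}

/-- Digging `dig_A : §A → §§A`, relating `Σᵢ wᵢ` to `[w₁, w₂, …]` for any finite or
countable family `(wᵢ)` of finite-or-countable multisets (sums being computed
pointwise in `ℕ∞` as suprema of finite partial sums). -/
noncomputable def sdig (A : Type) : Rel' (SMul' A) (SMul' (SMul' A)) :=
  {p | ∃ w : ℕ → Option (SMul' A), realizes w p.2 ∧
    ∀ a, p.1.val a = ⨆ s : Finset ℕ,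
      ∑ n ∈ s, (match w n with | some u => u.val a | none => 0)}

-- toolkit
instance : IsTopologicalSemiring ℕ∞ := {}

theorem enat_hasSum {ι : Type*} (f : ι → ℕ∞) : HasSum f (⨆ s : Finset ι, ∑ i ∈ s, f i) :=
  tendsto_atTop_iSup (Finset.sum_mono_set f)
theorem enat_summable {ι : Type*} (f : ι → ℕ∞) : Summable f := ⟨_, enat_hasSum f⟩
theorem enat_tsum_eq_iSup {ι : Type*} (f : ι → ℕ∞) : ∑' i, f i = ⨆ s : Finset ι, ∑ i ∈ s, f i :=
  (enat_hasSum f).tsum_eq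
theorem enat_tsum_mul_left {ι : Type*} (f : ι → ℕ∞) (c : ℕ∞) : ∑' i, c * f i = c * ∑' i, f i :=
  ((enat_summable f).hasSum.mul_left c).tsum_eq
theorem enat_tsum_mul_right {ι : Type*} (f : ι → ℕ∞) (c : ℕ∞) : ∑' i, f i * c = (∑' i, f i) * c :=
  ((enat_summable f).hasSum.mul_right c).tsum_eq
theorem enat_tsum_comm {ι κ : Type*} (f : ι → κ → ℕ∞) : ∑' i, ∑' k, f i k = ∑' k, ∑' i, f i k :=
  Summable.tsum_comm' (enat_summable _) (fun _ => enat_summable _) (fun _ => enat_summable _)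
theorem enat_tsum_prod {ι κ : Type*} (f : ι × κ → ℕ∞) : ∑' p, f p = ∑' i, ∑' k, f (i, k) :=
  Summable.tsum_prod' (enat_summable _) (fun _ => enat_summable _)

noncomputable def oval {A : Type} (F : A → ℕ∞) : Option A → ℕ∞
  | some a => F a
  | none => 0

theorem occCount_eq_tsum {A : Type} (w : ℕ → Option A) (a : A) :
    occCount w a = ∑' n, (if w n = some a then (1:ℕ∞) else 0) := by
  rw [enat_tsum_eq_iSup, occCount]
  refine iSup_congr fun s => ?_
  rw [Finset.card_filter]
  push_cast
  exact Finset.sum_congr rfl fun n _ => by split <;> simp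

theorem tsum_ite_lt (c : ℕ∞) : ∑' j : ℕ, (if (j : ℕ∞) < c then (1:ℕ∞) else 0) = c := by
  induction c using ENat.recTopCoe with
  | top =>
    have h : ∀ j : ℕ, (if ((j:ℕ∞) < ⊤) then (1:ℕ∞) else 0) = 1 := fun j =>
      if_pos (WithTop.coe_lt_top j)
    rw [tsum_congr h, enat_tsum_eq_iSup, iSup_eq_top]
    intro b hb
    lift b to ℕ using hb.ne
    refine ⟨Finset.range (b+1), ?_⟩
    rw [Finset.sum_const, Finset.card_range, nsmul_eq_mul, mul_one]
    exact_mod_cast Nat.lt_succ_self b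
  | coe k =>
    rw [tsum_eq_sum (s := Finset.range k) (fun j hj => if_neg (by
      simp only [Finset.mem_range, not_lt] at hj
      exact not_lt.mpr (by exact_mod_cast hj)))]
    rw [Finset.sum_congr rfl (fun j hj => if_pos (by
      simp only [Finset.mem_range] at hj
      exact_mod_cast hj))]
    simp

theorem tsum_oval {A : Type} {w : ℕ → Option A} {m : SMul' A} (hw : realizes w m) (F : A → ℕ∞) :
    ∑' n, oval F (w n) = ∑' a, m.val a * F a := by
  have h1 : ∀ n, oval F (w n) = ∑' a, (if w n = some a then (1:ℕ∞) else 0) * F a := by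
    intro n
    cases hwn : w n with
    | none => simp [oval, hwn]
    | some b =>
      rw [tsum_eq_single b (fun a ha => by
        rw [if_neg (by simp only [hwn, Option.some.injEq]; exact fun h => ha h.symm), zero_mul])]
      rw [if_pos rfl, one_mul]; rfl
  calc ∑' n, oval F (w n)
      = ∑' n, ∑' a, (if w n = some a then (1:ℕ∞) else 0) * F a := tsum_congr h1
    _ = ∑' a, ∑' n, (if w n = some a then (1:ℕ∞) else 0) * F a := enat_tsum_comm _
    _ = ∑' a, (∑' n, (if w n = some a then (1:ℕ∞) else 0)) * F a :=
        tsum_congr fun a => enat_tsum_mul_right _ _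
    _ = ∑' a, m.val a * F a := tsum_congr fun a => by rw [hw a, occCount_eq_tsum]

theorem occCount_eq_zero {A : Type} {w : ℕ → Option A} {a : A} (h : ∀ n, w n ≠ some a) :
    occCount w a = 0 := by
  rw [occCount_eq_tsum, tsum_congr (fun n => if_neg (h n)), tsum_zero]

theorem support_countable {A : Type} (w : ℕ → Option A) :
    Set.Countable {a : A | occCount w a ≠ 0} := by
  refine Set.Countable.mono ?_ (Set.countable_iUnion (fun n : ℕ =>
    Set.Subsingleton.countable (fun a (ha : w n = some a) b (hb : w n = some b) => by
      rw [ha] at hb; exact Option.some.inj hb)))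
  intro a ha
  by_contra hc
  exact ha (occCount_eq_zero fun n hn => hc (Set.mem_iUnion.mpr ⟨n, hn⟩))

noncomputable def wMul {A : Type} (w : ℕ → Option A) : SMul' A :=
  ⟨fun a => occCount w a, support_countable w⟩

theorem realizes_wMul {A : Type} (w : ℕ → Option A) : realizes w (wMul w) := fun _ => rfl

theorem exists_realizes {A : Type} (m : SMul' A) : ∃ w : ℕ → Option A, realizes w m := by
  obtain ⟨f, hf⟩ := Set.countable_iff_exists_injective.mp m.2
  set W : ℕ × ℕ → Option A := fun p =>
    if h : ∃ a : {a : A | m.val a ≠ 0}, f a = p.1 then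
      (if ((p.2 : ℕ∞) < m.val ((choose h : {a : A | m.val a ≠ 0}) : A)) then
        some ((choose h : {a : A | m.val a ≠ 0}) : A) else none)
    else none with hW
  refine ⟨fun n => W (Nat.pairEquiv.symm n), fun a => ?_⟩
  have key : ∀ (k j : ℕ) (a : A), W (k, j) = some a →
      ∃ ha : m.val a ≠ 0, k = f ⟨a, ha⟩ ∧ (j : ℕ∞) < m.val a := by
    intro k j a h
    rw [hW] at h
    simp only at h
    split at h
    · rename_i hex
      split at h
      · rename_i hlt
        have hc : ((choose hex : {a : A | m.val a ≠ 0}) : A) = a := Option.some.inj h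
        have haS : m.val a ≠ 0 := hc ▸ (choose hex).2
        refine ⟨haS, ?_, hc ▸ hlt⟩
        rw [← choose_spec hex]
        congr 1
        exact Subtype.ext hc
      · exact absurd h (by simp)
    · exact absurd h (by simp)
  have key2 : ∀ (k j : ℕ) (a : A) (ha : m.val a ≠ 0),
      (k = f ⟨a, ha⟩ ∧ (j : ℕ∞) < m.val a) → W (k, j) = some a := by
    intro k j a ha ⟨hk, hj⟩
    have hex : ∃ b : {a : A | m.val a ≠ 0}, f b = k := ⟨⟨a, ha⟩, hk.symm⟩
    have hch : choose hex = ⟨a, ha⟩ := hf (by rw [choose_spec hex, hk])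
    rw [hW]
    simp only
    rw [dif_pos hex, hch, if_pos hj]
  rw [occCount_eq_tsum]
  rw [Equiv.tsum_eq Nat.pairEquiv.symm (fun p => if W p = some a then (1:ℕ∞) else 0)]
  rw [enat_tsum_prod]
  by_cases ha : m.val a ≠ 0
  · have hcong : ∀ k j, (if W (k, j) = some a then (1:ℕ∞) else 0)
        = if k = f ⟨a, ha⟩ then (if (j:ℕ∞) < m.val a then (1:ℕ∞) else 0) else 0 := by
      intro k j
      by_cases h : W (k, j) = some a
      · obtain ⟨ha', hk, hj⟩ := key k j a h
        rw [if_pos h, if_pos hk, if_pos hj]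
      · rw [if_neg h]
        by_cases hk : k = f ⟨a, ha⟩
        · rw [if_pos hk]
          rw [if_neg (fun hj => h (key2 k j a ha ⟨hk, hj⟩))]
        · rw [if_neg hk]
    calc m.val a = (if (f ⟨a, ha⟩ : ℕ) = f ⟨a, ha⟩ then m.val a else 0) := by rw [if_pos rfl]
      _ = ∑' k, (if (k : ℕ) = f ⟨a, ha⟩ then m.val a else 0) :=
          (tsum_eq_single _ (fun k hk => if_neg hk)).symm
      _ = ∑' k, ∑' j, (if W (k, j) = some a then (1:ℕ∞) else 0) := by
          refine tsum_congr fun k => ?_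
          rw [tsum_congr (hcong k)]
          by_cases hk : k = f ⟨a, ha⟩
          · rw [if_pos hk, tsum_congr (fun j => if_pos hk), tsum_ite_lt]
          · rw [if_neg hk, tsum_congr (fun j => if_neg hk), tsum_zero]
  · have hma : m.val a = 0 := not_not.mp ha
    rw [hma]
    refine ((Summable.tsum_eq_zero_iff (enat_summable _)).mpr fun k => ?_).symm
    refine (Summable.tsum_eq_zero_iff (enat_summable _)).mpr fun j => ?_
    refine if_neg fun h => ?_
    obtain ⟨ha', _, _⟩ := key k j a h
    exact ha ha'


theorem sdig_sum_eq {A : Type} (w : ℕ → Option (SMul' A)) (a : A) :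
    (⨆ s : Finset ℕ, ∑ n ∈ s, (match w n with | some u => u.val a | none => 0))
      = ∑' n, oval (fun u => u.val a) (w n) := by
  rw [enat_tsum_eq_iSup]
  refine iSup_congr fun s => Finset.sum_congr rfl fun n _ => ?_
  cases w n <;> rfl

theorem mem_sdig_iff {A : Type} {m : SMul' A} {W : SMul' (SMul' A)} :
    (m, W) ∈ sdig A ↔ ∀ a, m.val a = ∑' u : SMul' A, W.val u * u.val a := by
  constructor
  · rintro ⟨w, hw, hm⟩ a
    rw [hm a, sdig_sum_eq, tsum_oval hw]
  · intro h
    obtain ⟨w, hw⟩ := exists_realizes W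
    exact ⟨w, hw, fun a => by rw [h a, sdig_sum_eq, tsum_oval hw]⟩

noncomputable def dirac {A : Type} (x : A) : SMul' A :=
  ⟨fun a => if a = x then 1 else 0, Set.Countable.mono
    (fun a ha => by
      simp only [Set.mem_setOf_eq] at ha
      by_contra h
      exact ha (if_neg h)) (Set.countable_singleton x)⟩

noncomputable def sumMul {A : Type} (Θ : SMul' (SMul' A)) : SMul' A :=
  ⟨fun a => ∑' v : SMul' A, Θ.val v * v.val a, by
    refine Set.Countable.mono ?_ (Set.Countable.biUnion Θ.2 (fun v _ => v.2))
    intro a ha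
    simp only [Set.mem_setOf_eq] at ha
    by_contra hc
    simp only [Set.mem_iUnion, Set.mem_setOf_eq, not_exists] at hc
    refine ha ((Summable.tsum_eq_zero_iff (enat_summable _)).mpr fun v => ?_)
    by_cases hv : Θ.val v = 0
    · rw [hv, zero_mul]
    · rw [not_not.mp (hc v hv), mul_zero]⟩

theorem law1 (A : Type) : rcomp (sdig A) (sder (SMul' A)) = rid (SMul' A) := by
  ext ⟨m, m'⟩
  simp only [rcomp, rid, Set.mem_setOf_eq]
  constructor
  · rintro ⟨W, hdig, hder⟩
    apply Subtype.ext; funext a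
    rw [mem_sdig_iff.mp hdig a, tsum_congr (fun u => by rw [hder u]),
      tsum_eq_single m' (fun u hu => by rw [if_neg hu, zero_mul]), if_pos rfl, one_mul]
  · rintro rfl
    refine ⟨dirac m, mem_sdig_iff.mpr fun a => ?_, fun u => rfl⟩
    rw [tsum_eq_single m (fun u hu => by
        show (if u = m then (1:ℕ∞) else 0) * u.val a = 0
        rw [if_neg hu, zero_mul])]
    show m.val a = (if m = m then (1:ℕ∞) else 0) * m.val a
    rw [if_pos rfl, one_mul]

theorem law2 (A : Type) : rcomp (sdig A) (sRel (sder A)) = rid (SMul' A) := by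
  ext ⟨m, m'⟩
  simp only [rcomp, rid, sRel, Set.mem_setOf_eq]
  constructor
  · rintro ⟨W, hdig, w₁, w₂, hw₁, hw₂, hnn, hrel⟩
    apply Subtype.ext; funext a
    rw [mem_sdig_iff.mp hdig a, ← tsum_oval hw₁ (fun u => u.val a), hw₂ a, occCount_eq_tsum]
    refine tsum_congr fun n => ?_
    cases h1 : w₁ n with
    | none =>
      rw [(hnn n).mp h1, if_neg (by simp)]
      rfl
    | some u =>
      cases h2 : w₂ n with
      | none => exact absurd h1 (by rw [(hnn n).mpr h2]; simp)
      | some b =>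
        have hu := hrel n u b h1 h2 a
        show u.val a = _
        rw [hu]
        by_cases hab : a = b
        · rw [if_pos hab, if_pos (by rw [hab])]
        · rw [if_neg hab, if_neg (by simp only [Option.some.injEq]; exact fun h => hab h.symm)]
  · rintro rfl
    obtain ⟨w₂, hw₂⟩ := exists_realizes m
    refine ⟨wMul (fun n => (w₂ n).map dirac), mem_sdig_iff.mpr fun a => ?_,
      (fun n => (w₂ n).map dirac), w₂, realizes_wMul _, hw₂, fun n => by cases h : w₂ n <;> simp [h],
      fun n u b h1 h2 a => ?_⟩
    · rw [← tsum_oval (realizes_wMul (fun n => (w₂ n).map dirac)) (fun u => u.val a),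
        hw₂ a, occCount_eq_tsum]
      refine tsum_congr fun n => ?_
      cases h2 : w₂ n with
      | none => rw [if_neg (by simp)]; rfl
      | some b =>
        show (if (some b : Option A) = some a then (1:ℕ∞) else 0) = (if a = b then (1:ℕ∞) else 0)
        by_cases hab : a = b
        · subst hab; rw [if_pos rfl, if_pos rfl]
        · rw [if_neg (by simp only [Option.some.injEq]; exact fun h => hab h.symm), if_neg hab]
    · simp only [h2, Option.map_some] at h1
      obtain rfl := Option.some.inj h1
      rfl

theorem swap_formula {B : Type} (Ω : SMul' (SMul' B)) (F : B → ℕ∞) :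
    ∑' u : B, (∑' Θ : SMul' B, Ω.val Θ * Θ.val u) * F u
      = ∑' Θ : SMul' B, Ω.val Θ * ∑' u : B, Θ.val u * F u := by
  calc ∑' u, (∑' Θ, Ω.val Θ * Θ.val u) * F u
      = ∑' u, ∑' Θ, Ω.val Θ * Θ.val u * F u :=
        tsum_congr fun u => (enat_tsum_mul_right _ _).symm
    _ = ∑' Θ, ∑' u, Ω.val Θ * Θ.val u * F u := enat_tsum_comm _
    _ = ∑' Θ, Ω.val Θ * ∑' u, Θ.val u * F u := by
        refine tsum_congr fun Θ => ?_
        rw [tsum_congr (fun u => mul_assoc (Ω.val Θ) (Θ.val u) (F u)), enat_tsum_mul_left]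

theorem law3 (A : Type) :
    rcomp (sdig A) (sdig (SMul' A)) = rcomp (sdig A) (sRel (sdig A)) := by
  ext ⟨m, Ω⟩
  simp only [rcomp, sRel, Set.mem_setOf_eq]
  constructor
  · rintro ⟨W, h1, h2⟩
    have hP : ∀ a, m.val a
        = ∑' Θ : SMul' (SMul' A), Ω.val Θ * ∑' u : SMul' A, Θ.val u * u.val a := by
      intro a
      calc m.val a = ∑' u, W.val u * u.val a := mem_sdig_iff.mp h1 a
        _ = ∑' u, (∑' Θ, Ω.val Θ * Θ.val u) * u.val a :=
            tsum_congr fun u => by rw [mem_sdig_iff.mp h2 u]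
        _ = _ := swap_formula Ω _
    obtain ⟨w₂, hw₂⟩ := exists_realizes Ω
    refine ⟨wMul (fun n => (w₂ n).map sumMul), mem_sdig_iff.mpr fun a => ?_,
      (fun n => (w₂ n).map sumMul), w₂, realizes_wMul _, hw₂,
      fun n => by cases h : w₂ n <;> simp [h], fun n u Θ hu hΘ => ?_⟩
    · rw [← tsum_oval (realizes_wMul (fun n => (w₂ n).map sumMul)) (fun u => u.val a), hP a,
        ← tsum_oval hw₂ (fun Θ => ∑' u : SMul' A, Θ.val u * u.val a)]
      refine tsum_congr fun n => ?_
      show oval (fun Θ => ∑' u : SMul' A, Θ.val u * u.val a) (w₂ n)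
        = oval (fun u => u.val a) ((w₂ n).map sumMul)
      cases h : w₂ n <;> rfl
    · simp only [hΘ, Option.map_some] at hu
      obtain rfl := Option.some.inj hu
      exact mem_sdig_iff.mpr fun a => rfl
  · rintro ⟨W', h1, w₁, w₂, hw₁, hw₂, hnn, hrel⟩
    have hP : ∀ a, m.val a
        = ∑' Θ : SMul' (SMul' A), Ω.val Θ * ∑' u : SMul' A, Θ.val u * u.val a := by
      intro a
      rw [mem_sdig_iff.mp h1 a, ← tsum_oval hw₁ (fun u => u.val a),
        ← tsum_oval hw₂ (fun Θ => ∑' u : SMul' A, Θ.val u * u.val a)]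
      refine tsum_congr fun n => ?_
      cases hn1 : w₁ n with
      | none => rw [(hnn n).mp hn1]; rfl
      | some u =>
        cases hn2 : w₂ n with
        | none => exact absurd hn1 (by rw [(hnn n).mpr hn2]; simp)
        | some Θ => exact mem_sdig_iff.mp (hrel n u Θ hn1 hn2) a
    refine ⟨sumMul Ω, mem_sdig_iff.mpr fun a => ?_, mem_sdig_iff.mpr fun u => rfl⟩
    rw [hP a]
    exact (swap_formula Ω (fun u => u.val a)).symm

/-- dereliction and digging make the finite-or-countable multiset
construction `§` a comonad on the category of sets and relations:
`der_{§A} ∘ dig_A = id`, `§der_A ∘ dig_A = id`, and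
`dig_{§A} ∘ dig_A = §dig_A ∘ dig_A`. -/
theorem smul_comonad :
    (∀ A : Type, rcomp (sdig A) (sder (SMul' A)) = rid (SMul' A)) ∧
    (∀ A : Type, rcomp (sdig A) (sRel (sder A)) = rid (SMul' A)) ∧
    (∀ A : Type, rcomp (sdig A) (sdig (SMul' A)) = rcomp (sdig A) (sRel (sdig A))) :=
  ⟨law1, law2, law3⟩
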